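/- arXiv:2311.00222 — 4 statements merged into one kernel-verified Lean document; each statement's English description precedes it below -/
import Mathlib

section
/- A strategy profile V̂ : Fin n → Finset (Fin m) is a Nash equilibrium of the partition game if and only if both of the following hold: (1) for every task q there exists an agent i that is dominating for q with q ∈ V̂ i; and (2) for every task q and every agent j that is not dominating for q, q ∉ V̂ j. -/
open Finset Filter

noncomputable def fsMax (s : Finset ℝ) : ℝ := WithBot.unbotD 0 s.max

noncomputable def fsMin (s : Finset ℝ) : ℝ := WithTop.untopD 0 s.min

noncomputable def fsSubmax (s : Finset ℝ) : ℝ := fsMax (s.filter (fun x => x < fsMax s))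

/-- Agent `i` is dominating for task `q`. -/
def Dominating {n m : ℕ} (f : Fin n → Fin m → ℝ) (i : Fin n) (q : Fin m) : Prop :=
  ∀ j, f j q ≤ f i q

/-- Maximum of `f j q` over agents `j ≠ i` with `q ∈ V j` (0 if that set is empty). -/
noncomputable def othersMax {n m : ℕ} (f : Fin n → Fin m → ℝ)
    (V : Fin n → Finset (Fin m)) (i : Fin n) (q : Fin m) : ℝ :=
  fsMax ((Finset.univ.filter (fun j => j ≠ i ∧ q ∈ V j)).image (fun j => f j q))

/-- Utility of agent `i` in the partition game. -/
noncomputable def Hutil {n m : ℕ} (f : Fin n → Fin m → ℝ)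
    (V : Fin n → Finset (Fin m)) (i : Fin n) : ℝ :=
  ∑ q ∈ V i, (f i q - othersMax f V i q)

/-- Nash equilibrium of the partition game. -/
def IsNashP {n m : ℕ} (f : Fin n → Fin m → ℝ) (V : Fin n → Finset (Fin m)) : Prop :=
  ∀ i, ∀ V' : Finset (Fin m), Hutil f (Function.update V i V') i ≤ Hutil f V i

lemma fsMax_le {s : Finset ℝ} {c : ℝ} (hc : 0 ≤ c) (h : ∀ x ∈ s, x ≤ c) : fsMax s ≤ c := by
  unfold fsMax
  rcases s.eq_empty_or_nonempty with rfl | hs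
  · simpa using hc
  · rw [← Finset.coe_max' hs, WithBot.unbotD_coe]
    exact Finset.max'_le _ _ _ h

lemma fsMax_lt {s : Finset ℝ} {c : ℝ} (hc : 0 < c) (h : ∀ x ∈ s, x < c) : fsMax s < c := by
  unfold fsMax
  rcases s.eq_empty_or_nonempty with rfl | hs
  · simpa using hc
  · rw [← Finset.coe_max' hs, WithBot.unbotD_coe]
    exact (Finset.max'_lt_iff s hs).mpr h

lemma le_fsMax {s : Finset ℝ} {x : ℝ} (hx : x ∈ s) : x ≤ fsMax s := by
  unfold fsMax
  have hs : s.Nonempty := ⟨x, hx⟩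
  rw [← Finset.coe_max' hs, WithBot.unbotD_coe]
  exact Finset.le_max' s x hx

lemma le_othersMax {n m : ℕ} (f : Fin n → Fin m → ℝ) (V : Fin n → Finset (Fin m))
    {i j : Fin n} {q : Fin m} (hj : j ≠ i) (hq : q ∈ V j) : f j q ≤ othersMax f V i q := by
  apply le_fsMax
  exact Finset.mem_image_of_mem _ (by simp [hj, hq])

lemma othersMax_le {n m : ℕ} (f : Fin n → Fin m → ℝ) (V : Fin n → Finset (Fin m))
    {i : Fin n} {q : Fin m} {c : ℝ} (hc : 0 ≤ c)
    (h : ∀ j, j ≠ i → q ∈ V j → f j q ≤ c) : othersMax f V i q ≤ c := by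
  apply fsMax_le hc
  intro x hx
  obtain ⟨j, hj, rfl⟩ := Finset.mem_image.mp hx
  simp only [Finset.mem_filter, Finset.mem_univ, true_and] at hj
  exact h j hj.1 hj.2

lemma othersMax_lt {n m : ℕ} (f : Fin n → Fin m → ℝ) (V : Fin n → Finset (Fin m))
    {i : Fin n} {q : Fin m} {c : ℝ} (hc : 0 < c)
    (h : ∀ j, j ≠ i → q ∈ V j → f j q < c) : othersMax f V i q < c := by
  apply fsMax_lt hc
  intro x hx
  obtain ⟨j, hj, rfl⟩ := Finset.mem_image.mp hx
  simp only [Finset.mem_filter, Finset.mem_univ, true_and] at hj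
  exact h j hj.1 hj.2

lemma othersMax_update {n m : ℕ} (f : Fin n → Fin m → ℝ) (V : Fin n → Finset (Fin m))
    (i : Fin n) (V' : Finset (Fin m)) (q : Fin m) :
    othersMax f (Function.update V i V') i q = othersMax f V i q := by
  unfold othersMax
  congr 2
  ext j
  simp only [Finset.mem_filter, Finset.mem_univ, true_and]
  constructor
  · rintro ⟨h1, h2⟩
    exact ⟨h1, by rwa [Function.update_of_ne h1] at h2⟩
  · rintro ⟨h1, h2⟩
    exact ⟨h1, by rwa [Function.update_of_ne h1]⟩

lemma Hutil_update {n m : ℕ} (f : Fin n → Fin m → ℝ) (V : Fin n → Finset (Fin m))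
    (i : Fin n) (V' : Finset (Fin m)) :
    Hutil f (Function.update V i V') i = ∑ q ∈ V', (f i q - othersMax f V i q) := by
  unfold Hutil
  rw [Function.update_self]
  exact Finset.sum_congr rfl fun q _ => by rw [othersMax_update]

theorem nash_partition_game_characterization {n m : ℕ} (f : Fin n → Fin m → ℝ)
    (hf : ∀ i q, 0 ≤ f i q)
    (hnt : ∀ q : Fin m, ∃ j : Fin n, ¬ Dominating f j q)
    (Vhat : Fin n → Finset (Fin m)) :
    IsNashP f Vhat ↔
      ((∀ q, ∃ i, Dominating f i q ∧ q ∈ Vhat i) ∧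
        (∀ q, ∀ j, ¬ Dominating f j q → q ∉ Vhat j)) := by
  -- existence of a dominating agent
  have hdom : ∀ q : Fin m, ∃ i, Dominating f i q := by
    intro q
    have : Nonempty (Fin n) := ⟨(hnt q).choose⟩
    obtain ⟨i, hi⟩ := Finite.exists_max (fun j => f j q)
    exact ⟨i, hi⟩
  -- a non-dominating agent is strictly below any dominating agent
  have hlt : ∀ q : Fin m, ∀ i j : Fin n, Dominating f i q → ¬ Dominating f j q →
      f j q < f i q := by
    intro q i j hi hj
    rw [Dominating] at hj
    push_neg at hj
    obtain ⟨k, hk⟩ := hj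
    exact hk.trans_le (hi k)
  -- dominating values are positive
  have hpos : ∀ q : Fin m, ∀ i : Fin n, Dominating f i q → 0 < f i q := by
    intro q i hi
    obtain ⟨j, hj⟩ := hnt q
    exact (hf j q).trans_lt (hlt q i j hi hj)
  constructor
  · intro hN
    have h1 : ∀ q, ∃ i, Dominating f i q ∧ q ∈ Vhat i := by
      intro q
      by_contra hcon
      push_neg at hcon
      obtain ⟨i0, hi0⟩ := hdom q
      have hq0 : q ∉ Vhat i0 := hcon i0 hi0
      have hMlt : othersMax f Vhat i0 q < f i0 q := by
        apply othersMax_lt f Vhat (hpos q i0 hi0)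
        intro j hj hqj
        have hjnd : ¬ Dominating f j q := fun hd => hcon j hd hqj
        exact hlt q i0 j hi0 hjnd
      have := hN i0 (insert q (Vhat i0))
      rw [Hutil_update, Finset.sum_insert hq0] at this
      have hH : Hutil f Vhat i0 = ∑ q' ∈ Vhat i0, (f i0 q' - othersMax f Vhat i0 q') := rfl
      rw [hH] at this
      linarith
    refine ⟨h1, ?_⟩
    intro q j hjnd hqj
    obtain ⟨i, hi, hqi⟩ := h1 q
    have hij : i ≠ j := fun h => hjnd (h ▸ hi)
    have hMge : f i q ≤ othersMax f Vhat j q := le_othersMax f Vhat hij hqi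
    have hflt : f j q < f i q := hlt q i j hi hjnd
    have := hN j ((Vhat j).erase q)
    rw [Hutil_update] at this
    have hsum : ∑ q' ∈ (Vhat j).erase q, (f j q' - othersMax f Vhat j q')
        = Hutil f Vhat j - (f j q - othersMax f Vhat j q) := by
      rw [show Hutil f Vhat j = ∑ q' ∈ Vhat j, (f j q' - othersMax f Vhat j q') from rfl,
        ← Finset.add_sum_erase _ _ hqj]
      ring
    rw [hsum] at this
    linarith
  · rintro ⟨h1, h2⟩ i V'
    rw [Hutil_update]
    -- terms outside Vhat i are nonpositive
    have hterm_nonpos : ∀ q ∈ V' \ Vhat i, f i q - othersMax f Vhat i q ≤ 0 := by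
      intro q hq
      obtain ⟨hqV', hqVhat⟩ := Finset.mem_sdiff.mp hq
      obtain ⟨i', hi', hqi'⟩ := h1 q
      have hne : i' ≠ i := fun h => hqVhat (h ▸ hqi')
      have h1' : f i' q ≤ othersMax f Vhat i q := le_othersMax f Vhat hne hqi'
      have h2' : f i q ≤ f i' q := hi' i
      linarith
    -- terms inside Vhat i are nonnegative
    have hterm_nonneg : ∀ q ∈ Vhat i, 0 ≤ f i q - othersMax f Vhat i q := by
      intro q hq
      have hid : Dominating f i q := by
        by_contra hnd
        exact h2 q i hnd hq
      have : othersMax f Vhat i q ≤ f i q :=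
        othersMax_le f Vhat (hf i q) (fun j _ _ => hid j)
      linarith
    calc ∑ q ∈ V', (f i q - othersMax f Vhat i q)
        = ∑ q ∈ V' ∩ Vhat i, (f i q - othersMax f Vhat i q)
          + ∑ q ∈ V' \ Vhat i, (f i q - othersMax f Vhat i q) :=
          (Finset.sum_inter_add_sum_sdiff _ _ _).symm
      _ ≤ ∑ q ∈ V' ∩ Vhat i, (f i q - othersMax f Vhat i q) := by
          have : ∑ q ∈ V' \ Vhat i, (f i q - othersMax f Vhat i q) ≤ 0 :=
            Finset.sum_nonpos hterm_nonpos
          linarith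
      _ ≤ ∑ q ∈ Vhat i, (f i q - othersMax f Vhat i q) :=
          Finset.sum_le_sum_of_subset_of_nonneg (Finset.inter_subset_right)
            (fun q hq _ => hterm_nonneg q hq)
      _ = Hutil f Vhat i := rfl
end

section
/- If P* is an optimal partition, then every task is assigned only to a dominating agent: for every agent i and every task q, if q ∈ P* i then i is dominating for q. -/
open Finset Filter

/-- `P` is a partition of the task set: pairwise disjoint with union everything. -/
def IsPartitionP {n m : ℕ} (P : Fin n → Finset (Fin m)) : Prop :=
  (∀ i j, i ≠ j → Disjoint (P i) (P j)) ∧ (∀ q, ∃ i, q ∈ P i)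

/-- Value of a partition. -/
noncomputable def Jval {n m : ℕ} (f : Fin n → Fin m → ℝ) (P : Fin n → Finset (Fin m)) : ℝ :=
  ∑ i, ∑ q ∈ P i, f i q

/-- Optimal partition. -/
def IsOptimalPartition {n m : ℕ} (f : Fin n → Fin m → ℝ) (P : Fin n → Finset (Fin m)) : Prop :=
  IsPartitionP P ∧ ∀ P', IsPartitionP P' → Jval f P' ≤ Jval f P

theorem optimal_partition_assigns_dominating {n m : ℕ} (f : Fin n → Fin m → ℝ)
    (hf : ∀ i q, 0 ≤ f i q)
    (Pstar : Fin n → Finset (Fin m)) (hopt : IsOptimalPartition f Pstar) :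
    ∀ i q, q ∈ Pstar i → Dominating f i q := by
  obtain ⟨⟨hdisj, hcov⟩, hopt⟩ := hopt
  intro i q hq j
  by_contra h
  push_neg at h
  have hji : j ≠ i := by
    rintro rfl; exact lt_irrefl _ h
  have hqj : q ∉ Pstar j := fun hqj =>
    Finset.disjoint_left.mp (hdisj j i hji) hqj hq
  set P' : Fin n → Finset (Fin m) :=
    fun k => if k = j then insert q (Pstar j) else (Pstar k).erase q with hP'
  have hpart : IsPartitionP P' := by
    constructor
    · intro a b hab
      by_cases ha : a = j <;> by_cases hb : b = j
      · exact absurd (ha.trans hb.symm) hab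
      · subst ha
        simp only [hP', if_pos rfl, if_neg hb]
        rw [Finset.disjoint_left]
        intro x hx hx'
        rcases Finset.mem_insert.mp hx with rfl | hx
        · exact (Finset.mem_erase.mp hx').1 rfl
        · exact Finset.disjoint_left.mp (hdisj a b hab) hx (Finset.mem_erase.mp hx').2
      · subst hb
        simp only [hP', if_pos rfl, if_neg ha]
        rw [Finset.disjoint_left]
        intro x hx hx'
        rcases Finset.mem_insert.mp hx' with rfl | hx'
        · exact (Finset.mem_erase.mp hx).1 rfl
        · exact Finset.disjoint_left.mp (hdisj a b hab) (Finset.mem_erase.mp hx).2 hx'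
      · simp only [hP', if_neg ha, if_neg hb]
        exact Finset.disjoint_of_subset_left (Finset.erase_subset _ _)
          (Finset.disjoint_of_subset_right (Finset.erase_subset _ _) (hdisj a b hab))
    · intro q'
      by_cases hq' : q' = q
      · exact ⟨j, by simp [hP', hq']⟩
      · obtain ⟨k, hk⟩ := hcov q'
        by_cases hkj : k = j
        · exact ⟨j, by simp [hP', hkj ▸ hk]⟩
        · exact ⟨k, by simp [hP', hkj, hk, hq']⟩
  have hval : Jval f P' = Jval f Pstar + f j q - f i q := by
    unfold Jval
    have key : ∀ k, (∑ x ∈ P' k, f k x) =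
        (∑ x ∈ Pstar k, f k x) + (if k = j then f j q else 0)
          - (if k = i then f i q else 0) := by
      intro k
      by_cases hkj : k = j
      · rw [hkj]
        simp only [hP', if_pos rfl, if_neg hji]
        rw [Finset.sum_insert hqj]
        simp [hji]
        ring
      · simp only [hP', if_neg hkj]
        by_cases hki : k = i
        · rw [hki]
          rw [Finset.sum_erase_eq_sub hq]
          rw [hki] at hkj
          simp [hkj]
        · have : q ∉ Pstar k := fun hmem =>
            Finset.disjoint_left.mp (hdisj k i hki) hmem hq
          rw [Finset.erase_eq_of_notMem this]
          simp [hkj, hki]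
    rw [Finset.sum_congr rfl (fun k _ => key k)]
    rw [Finset.sum_sub_distrib, Finset.sum_add_distrib]
    simp [Finset.sum_ite_eq']
  have := hopt P' hpart
  rw [hval] at this
  linarith
end

section
/- A matrix W̄ : Fin n → Fin m → ℝ with all entries in [0,1] is a fixed point of the PBRAG map if and only if W̄ is a Nash equilibrium of the weight game. -/
open Finset Filter

/-- Maximum of `g j` over all `j ≠ i` (0 if that set is empty). -/
noncomputable def maxErase {n : ℕ} (i : Fin n) (g : Fin n → ℝ) : ℝ :=
  fsMax ((Finset.univ.erase i).image g)

/-- Utility of agent `i` in the weight game. -/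
noncomputable def Uutil {n m : ℕ} (f : Fin n → Fin m → ℝ) (w : Fin n → Fin m → ℝ)
    (i : Fin n) : ℝ :=
  ∑ q, (f i q * w i q - maxErase i (fun j => f j q * w j q) * w i q)

/-- All entries of the matrix lie in `[0,1]`. -/
def InUnit {n m : ℕ} (w : Fin n → Fin m → ℝ) : Prop :=
  ∀ i q, w i q ∈ Set.Icc (0 : ℝ) 1

/-- Nash equilibrium of the weight game. -/
def IsNashW {n m : ℕ} (f : Fin n → Fin m → ℝ) (w : Fin n → Fin m → ℝ) : Prop :=
  ∀ i, ∀ w' : Fin m → ℝ, (∀ q, w' q ∈ Set.Icc (0 : ℝ) 1) →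
    Uutil f (Function.update w i w') i ≤ Uutil f w i

noncomputable def clamp (x : ℝ) : ℝ := max 0 (min x 1)

/-- One step of the projected best-response ascending gradient dynamics. -/
noncomputable def pbrag {n m : ℕ} (f γ : Fin n → Fin m → ℝ)
    (w : Fin n → Fin m → ℝ) : Fin n → Fin m → ℝ :=
  fun i q => clamp (w i q + γ i q * (f i q - maxErase i (fun j => f j q * w j q)))

lemma maxErase_congr {n : ℕ} (i : Fin n) (g g' : Fin n → ℝ)
    (h : ∀ j, j ≠ i → g j = g' j) : maxErase i g = maxErase i g' := by
  unfold maxErase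
  congr 1
  apply Finset.image_congr
  intro j hj
  exact h j (Finset.mem_erase.mp hj).1

lemma clamp_fixed_iff (w d γ : ℝ) (hγ : 0 < γ) (h0 : 0 ≤ w) (h1 : w ≤ 1) :
    clamp (w + γ * d) = w ↔ ∀ x ∈ Set.Icc (0:ℝ) 1, d * x ≤ d * w := by
  unfold clamp
  rcases lt_trichotomy d 0 with hd | hd | hd
  · constructor
    · intro h x hx
      have hw0 : w = 0 := by
        by_contra hne
        have hwp : 0 < w := lt_of_le_of_ne h0 (Ne.symm hne)
        have hmin : min (w + γ * d) 1 = w + γ * d := min_eq_left (by nlinarith)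
        rw [hmin] at h
        rcases le_or_gt (w + γ*d) 0 with h' | h'
        · rw [max_eq_left h'] at h; linarith
        · rw [max_eq_right h'.le] at h; nlinarith
      subst hw0
      have := hx.1
      nlinarith
    · intro h
      have hw0 : w = 0 := by
        have := h 0 ⟨le_refl 0, zero_le_one⟩
        nlinarith
      subst hw0
      rw [zero_add]
      have : min (γ * d) 1 = γ * d := min_eq_left (by nlinarith)
      rw [this, max_eq_left (by nlinarith)]
  · subst hd
    constructor
    · intro _ x _; simp
    · intro _
      rw [mul_zero, add_zero, min_eq_left h1, max_eq_right h0]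
  · constructor
    · intro h x hx
      have hw1 : w = 1 := by
        by_contra hne
        have hwl : w < 1 := lt_of_le_of_ne h1 hne
        have : w < max 0 (min (w + γ * d) 1) := by
          rcases le_or_gt (w + γ * d) 1 with h' | h'
          · rw [min_eq_left h']
            calc w < w + γ * d := by nlinarith
              _ ≤ max 0 (w + γ * d) := le_max_right _ _
          · rw [min_eq_right h'.le]
            calc w < 1 := hwl
              _ ≤ max 0 1 := le_max_right _ _
        linarith [this.trans_eq h]
      subst hw1
      have := hx.2
      nlinarith
    · intro h
      have hw1 : w = 1 := by
        have := h 1 ⟨zero_le_one, le_refl 1⟩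
        nlinarith
      subst hw1
      rw [min_eq_right (by nlinarith), max_eq_right zero_le_one]

lemma uutil_eq {n m : ℕ} (f W : Fin n → Fin m → ℝ) (i : Fin n) :
    Uutil f W i = ∑ q, (f i q - maxErase i (fun j => f j q * W j q)) * W i q := by
  unfold Uutil
  exact Finset.sum_congr rfl (fun q _ => by ring)

lemma uutil_update {n m : ℕ} (f W : Fin n → Fin m → ℝ) (i : Fin n) (w' : Fin m → ℝ) :
    Uutil f (Function.update W i w') i =
      ∑ q, (f i q - maxErase i (fun j => f j q * W j q)) * w' q := by
  unfold Uutil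
  apply Finset.sum_congr rfl
  intro q _
  rw [Function.update_self]
  have h : maxErase i (fun j => f j q * Function.update W i w' j q)
       = maxErase i (fun j => f j q * W j q) := by
    apply maxErase_congr
    intro j hj
    rw [Function.update_of_ne hj]
  rw [h]; ring

theorem pbrag_fixed_point_iff_nash {n m : ℕ} (f : Fin n → Fin m → ℝ)
    (hf : ∀ i q, 0 ≤ f i q)
    (hnt : ∀ q : Fin m, ∃ j : Fin n, ¬ Dominating f j q)
    (γ : Fin n → Fin m → ℝ) (hγ : ∀ i q, 0 < γ i q)
    (Wbar : Fin n → Fin m → ℝ) (hWbar : InUnit Wbar) :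
    pbrag f γ Wbar = Wbar ↔ IsNashW f Wbar := by
  have hpt : (pbrag f γ Wbar = Wbar) ↔
      ∀ i q, ∀ x ∈ Set.Icc (0:ℝ) 1,
        (f i q - maxErase i (fun j => f j q * Wbar j q)) * x ≤
        (f i q - maxErase i (fun j => f j q * Wbar j q)) * Wbar i q := by
    rw [funext_iff]
    apply forall_congr'
    intro i
    rw [funext_iff]
    apply forall_congr'
    intro q
    exact clamp_fixed_iff (Wbar i q) _ (γ i q) (hγ i q) (hWbar i q).1 (hWbar i q).2
  rw [hpt]
  constructor
  · intro h i w' hw'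
    rw [uutil_update, uutil_eq]
    apply Finset.sum_le_sum
    intro q _
    exact h i q (w' q) (hw' q)
  · intro hnash i q x hx
    have hmem : ∀ q', Function.update (Wbar i) q x q' ∈ Set.Icc (0:ℝ) 1 := by
      intro q'
      by_cases h : q' = q
      · subst h; rw [Function.update_self]; exact hx
      · rw [Function.update_of_ne h]; exact hWbar i q'
    have key := hnash i (Function.update (Wbar i) q x) hmem
    rw [uutil_update, uutil_eq] at key
    rw [← Finset.sum_erase_add _ _ (Finset.mem_univ q),
        ← Finset.sum_erase_add _ _ (Finset.mem_univ q)] at key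
    have hsame : (∑ q' ∈ Finset.univ.erase q,
          (f i q' - maxErase i (fun j => f j q' * Wbar j q')) * Function.update (Wbar i) q x q')
        = ∑ q' ∈ Finset.univ.erase q,
          (f i q' - maxErase i (fun j => f j q' * Wbar j q')) * Wbar i q' := by
      apply Finset.sum_congr rfl
      intro q' hq'
      rw [Function.update_of_ne (Finset.mem_erase.mp hq').1]
    rw [hsame, Function.update_self] at key
    linarith
end

section
/- Every PBRAG trajectory converges to an equilibrium weight: for any PBRAG trajectory W there exists a matrix W̄ with all entries in [0,1] that is a fixed point of the PBRAG map, such that for all agents i and tasks q, W t i q → W̄ i q as t → ∞. -/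
open Finset Filter

lemma clamp_mem (x : ℝ) : clamp x ∈ Set.Icc (0:ℝ) 1 :=
  ⟨le_max_left _ _, max_le zero_le_one (min_le_right _ _)⟩

lemma clamp_of_mem {x : ℝ} (h : x ∈ Set.Icc (0:ℝ) 1) : clamp x = x := by
  unfold clamp; rw [min_eq_left h.2, max_eq_right h.1]

lemma clamp_nonpos {x : ℝ} (h : x ≤ 0) : clamp x = 0 :=
  max_eq_left (le_trans (min_le_left _ _) h)

lemma clamp_one_le {x : ℝ} (h : 1 ≤ x) : clamp x = 1 := by
  unfold clamp; rw [min_eq_right h]; exact max_eq_right zero_le_one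

lemma le_clamp {w x : ℝ} (h1 : w ≤ 1) (h : w ≤ x) : w ≤ clamp x :=
  le_max_of_le_right (le_min h h1)

lemma maxErase_eq_sup' {n : ℕ} (i : Fin n)
    (h : ((Finset.univ : Finset (Fin n)).erase i).Nonempty) (g : Fin n → ℝ) :
    maxErase i g = (Finset.univ.erase i).sup' h g := by
  unfold maxErase fsMax
  rw [← Finset.coe_max' (h.image g), Finset.max'_eq_sup', Finset.sup'_image]
  rfl

lemma tendsto_finset_sup' {ι : Type*} {s : Finset ι} (hs : s.Nonempty) (g : ι → ℕ → ℝ) (b : ι → ℝ)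
    (h : ∀ i ∈ s, Tendsto (g i) atTop (nhds (b i))) :
    Tendsto (fun t => s.sup' hs (fun i => g i t)) atTop (nhds (s.sup' hs b)) := by
  induction hs using Finset.Nonempty.cons_induction with
  | singleton a => simpa using h a (by simp)
  | cons a s ha hne ih =>
    simp only [Finset.sup'_cons hne]
    exact (h a (by simp)).max (ih (fun i hi => h i (by simp [hi])))

lemma column {n : ℕ} (a : Fin n → ℝ) (ha : ∀ i, 0 ≤ a i)
    (hnt : ∃ j k : Fin n, a j < a k)
    (γ : Fin n → ℝ) (hγ : ∀ i, 0 < γ i)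
    (w : ℕ → Fin n → ℝ) (h0 : ∀ i, w 0 i ∈ Set.Icc (0:ℝ) 1)
    (hs : ∀ t i, w (t+1) i = clamp (w t i + γ i * (a i - maxErase i (fun j => a j * w t j)))) :
    ∃ L : Fin n → ℝ, (∀ i, L i ∈ Set.Icc (0:ℝ) 1) ∧
      (∀ i, clamp (L i + γ i * (a i - maxErase i (fun j => a j * L j))) = L i) ∧
      ∀ i, Tendsto (fun t => w t i) atTop (nhds (L i)) := by
  classical
  obtain ⟨j0, k0, hjk⟩ := hnt
  have hne : (Finset.univ : Finset (Fin n)).Nonempty := ⟨k0, Finset.mem_univ _⟩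
  have herase : ∀ i : Fin n, ((Finset.univ : Finset (Fin n)).erase i).Nonempty := by
    intro i
    rcases ne_or_eq j0 i with h | h
    · exact ⟨j0, Finset.mem_erase.2 ⟨h, Finset.mem_univ _⟩⟩
    · refine ⟨k0, Finset.mem_erase.2 ⟨?_, Finset.mem_univ _⟩⟩
      rintro rfl; subst h; exact lt_irrefl _ hjk
  set astar := Finset.univ.sup' hne a with hastar_def
  have hle : ∀ i, a i ≤ astar := fun i => Finset.le_sup' a (Finset.mem_univ i)
  have hapos : 0 < astar := lt_of_le_of_lt (ha j0) (lt_of_lt_of_le hjk (hle k0))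
  have hbound : ∀ t i, w t i ∈ Set.Icc (0:ℝ) 1 := by
    intro t
    induction t with
    | zero => exact h0
    | succ t ih => intro i; rw [hs t i]; exact clamp_mem _
  have hs' : ∀ t i, w (t+1) i =
      clamp (w t i + γ i * (a i -
        (Finset.univ.erase i).sup' (herase i) (fun j => a j * w t j))) := by
    intro t i; rw [hs t i, maxErase_eq_sup' i (herase i)]
  have hSle : ∀ (v : Fin n → ℝ), (∀ j, v j ∈ Set.Icc (0:ℝ) 1) → ∀ i,
      (Finset.univ.erase i).sup' (herase i) (fun j => a j * v j) ≤ astar := by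
    intro v hv i
    refine Finset.sup'_le _ _ (fun j _ => ?_)
    calc a j * v j ≤ a j * 1 := mul_le_mul_of_nonneg_left (hv j).2 (ha j)
    _ = a j := mul_one _
    _ ≤ astar := hle j
  have hmono : ∀ i, a i = astar → Monotone fun t => w t i := by
    intro i hi
    apply monotone_nat_of_le_succ
    intro t
    rw [hs' t i]
    refine le_clamp (hbound t i).2 ?_
    have h1 := hSle _ (hbound t) i
    nlinarith [hγ i, hi ▸ h1]
  have hbdd : ∀ i, BddAbove (Set.range fun t => w t i) :=
    fun i => ⟨1, by rintro x ⟨t, rfl⟩; exact (hbound t i).2⟩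
  have hsup_mem : ∀ i, (⨆ t, w t i) ∈ Set.Icc (0:ℝ) 1 :=
    fun i => ⟨le_trans (hbound 0 i).1 (le_ciSup (hbdd i) 0), ciSup_le fun t => (hbound t i).2⟩
  have htendsup : ∀ i, a i = astar → Tendsto (fun t => w t i) atTop (nhds (⨆ t, w t i)) :=
    fun i hi => tendsto_atTop_ciSup (hmono i hi) (hbdd i)
  have hwle_sup : ∀ i t, w t i ≤ ⨆ s, w s i := fun i t => le_ciSup (hbdd i) t
  have hlin : ∀ i, a i = astar → (⨆ t, w t i) < 1 → ∀ t,
      w (t+1) i = w t i + γ i * (astar -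
        (Finset.univ.erase i).sup' (herase i) (fun j => a j * w t j)) := by
    intro i hi hsup t
    rw [hs' t i, hi]
    set x := w t i + γ i * (astar -
      (Finset.univ.erase i).sup' (herase i) (fun j => a j * w t j)) with hx
    have hx0 : 0 ≤ x := by
      have h1 := hSle _ (hbound t) i
      have h2 := (hbound t i).1
      nlinarith [hγ i]
    rcases le_or_gt x 1 with h1 | h1
    · exact clamp_of_mem ⟨hx0, h1⟩
    · exfalso
      have h2 := hwle_sup i (t+1)
      rw [hs' t i, hi, ← hx, clamp_one_le h1.le] at h2
      exact absurd (lt_of_le_of_lt h2 hsup) (lt_irrefl _)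
  have hkey : ∀ i, a i = astar → (⨆ t, w t i) < 1 →
      Tendsto (fun t => (Finset.univ.erase i).sup' (herase i) (fun j => a j * w t j))
        atTop (nhds astar) := by
    intro i hi hsup
    have h1 : Tendsto (fun t => w (t+1) i - w t i) atTop (nhds 0) := by
      have h2 := ((htendsup i hi).comp (tendsto_add_atTop_nat 1)).sub (htendsup i hi)
      simpa using h2
    have h2 : ∀ t, (Finset.univ.erase i).sup' (herase i) (fun j => a j * w t j)
        = astar - (w (t+1) i - w t i) / γ i := by
      intro t
      rw [hlin i hi hsup t, add_sub_cancel_left,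
        mul_div_cancel_left₀ _ (hγ i).ne', sub_sub_cancel]
    simp_rw [h2]
    simpa using (tendsto_const_nhds (x := astar) (f := (atTop : Filter ℕ))).sub
      (h1.div_const (γ i))
  obtain ⟨istar0, -, histar0⟩ := Finset.exists_mem_eq_sup' hne a
  have hstepA : ∃ i, a i = astar ∧ (⨆ t, w t i) = 1 := by
    by_contra hcon
    push_neg at hcon
    have hsuplt : ∀ i, a i = astar → (⨆ t, w t i) < 1 :=
      fun i hi => lt_of_le_of_ne (hsup_mem i).2 (hcon i hi)
    set b : Fin n → ℝ := fun j => if a j = astar then astar * (⨆ t, w t j) else a j with hb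
    have hbj : ∀ j t, a j * w t j ≤ b j := by
      intro j t
      by_cases hj : a j = astar
      · simp only [hb, if_pos hj]
        rw [hj]
        exact mul_le_mul_of_nonneg_left (hwle_sup j t) hapos.le
      · simp only [hb, if_neg hj]
        exact mul_le_of_le_one_right (ha j) (hbound t j).2
    have hbstar : ∀ j, b j < astar := by
      intro j
      by_cases hj : a j = astar
      · simp only [hb, if_pos hj]
        calc astar * (⨆ t, w t j) < astar * 1 :=
              mul_lt_mul_of_pos_left (hsuplt j hj) hapos
        _ = astar := mul_one _
      · simp only [hb, if_neg hj]
        exact lt_of_le_of_ne (hle j) hj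
    have hSB : ∀ t, (Finset.univ.erase istar0).sup' (herase istar0) (fun j => a j * w t j)
        ≤ (Finset.univ.erase istar0).sup' (herase istar0) b :=
      fun t => Finset.sup'_le _ _ fun j hj => le_trans (hbj j t) (Finset.le_sup' b hj)
    have hBlt : (Finset.univ.erase istar0).sup' (herase istar0) b < astar :=
      (Finset.sup'_lt_iff (herase istar0)).2 (fun j _ => hbstar j)
    have htendS := hkey istar0 histar0.symm (hsuplt istar0 histar0.symm)
    have hfin : astar ≤ (Finset.univ.erase istar0).sup' (herase istar0) b :=
      le_of_tendsto htendS (Eventually.of_forall hSB)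
    exact absurd (lt_of_le_of_lt hfin hBlt) (lt_irrefl _)
  obtain ⟨istar, histar, hsup1⟩ := hstepA
  have htend1 : Tendsto (fun t => w t istar) atTop (nhds 1) := by
    have h := htendsup istar histar; rwa [hsup1] at h
  set L : Fin n → ℝ := fun i => if a i = astar then ⨆ t, w t i else 0 with hL
  have hLmem : ∀ i, L i ∈ Set.Icc (0:ℝ) 1 := by
    intro i; by_cases hi : a i = astar
    · simp only [hL, if_pos hi]; exact hsup_mem i
    · simp only [hL, if_neg hi]; exact ⟨le_rfl, zero_le_one⟩
  have hListar : L istar = 1 := by simp only [hL, if_pos histar]; exact hsup1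
  have hzero : ∀ j, ¬ (a j = astar) → ∃ T0, ∀ t, T0 ≤ t → w t j = 0 := by
    intro j hj
    have hjlt : a j < astar := lt_of_le_of_ne (hle j) hj
    have hne_star : istar ≠ j := by rintro rfl; exact hj histar
    have htends : Tendsto (fun t => astar * w t istar) atTop (nhds astar) := by
      simpa using tendsto_const_nhds.mul htend1
    obtain ⟨T, hT⟩ := (eventually_atTop).1 (htends.eventually (eventually_gt_nhds hjlt))
    set c := astar * w T istar - a j with hc
    have hcpos : 0 < c := sub_pos.2 (hT T le_rfl)
    have hSge : ∀ t, T ≤ t →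
        a j - (Finset.univ.erase j).sup' (herase j) (fun k => a k * w t k) ≤ -c := by
      intro t ht
      have h1 : a istar * w t istar ≤
          (Finset.univ.erase j).sup' (herase j) (fun k => a k * w t k) :=
        Finset.le_sup' (fun k => a k * w t k)
          (Finset.mem_erase.2 ⟨hne_star, Finset.mem_univ istar⟩)
      rw [histar] at h1
      have h2 : astar * w T istar ≤ astar * w t istar :=
        mul_le_mul_of_nonneg_left (hmono istar histar ht) hapos.le
      linarith
    have hdec : ∀ k : ℕ, w (T+k) j = 0 ∨ w (T+k) j ≤ w T j - k * (γ j * c) := by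
      intro k
      induction k with
      | zero => right; simp
      | succ k ih =>
        have hstep : w (T+k+1) j = clamp (w (T+k) j + γ j * (a j -
            (Finset.univ.erase j).sup' (herase j) (fun l => a l * w (T+k) l))) := hs' (T+k) j
        set x := w (T+k) j + γ j * (a j -
            (Finset.univ.erase j).sup' (herase j) (fun l => a l * w (T+k) l)) with hxdef
        have hx : x ≤ w (T+k) j - γ j * c := by
          have h1 := hSge (T+k) (Nat.le_add_right T k)
          nlinarith [hγ j]
        have heq : w (T+(k+1)) j = clamp x := by
          rw [show T+(k+1) = (T+k)+1 from rfl]; exact hstep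
        rcases le_or_gt x 0 with h0 | h0
        · left; rw [heq]; exact clamp_nonpos h0
        · right
          rcases ih with h | h
          · exfalso
            have := hx
            rw [h] at this
            nlinarith [hγ j]
          · rw [heq, clamp_of_mem ⟨h0.le, by nlinarith [(hbound (T+k) j).2, hγ j]⟩]
            calc x ≤ w (T+k) j - γ j * c := hx
            _ ≤ (w T j - k * (γ j * c)) - γ j * c := by linarith
            _ = w T j - (k+1 : ℕ) * (γ j * c) := by push_cast; ring
    obtain ⟨K, hK⟩ := exists_nat_gt (w T j / (γ j * c))
    refine ⟨T + K, fun t ht => ?_⟩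
    obtain ⟨k, rfl⟩ := Nat.exists_eq_add_of_le ht
    have hTk : T + K + k = T + (K + k) := by omega
    rw [hTk]
    rcases hdec (K + k) with h | h
    · exact h
    · exfalso
      have hγc : 0 < γ j * c := mul_pos (hγ j) hcpos
      have h1 : w T j < K * (γ j * c) := (div_lt_iff₀ hγc).1 hK
      have h2 : (K : ℝ) ≤ (K + k : ℕ) := by push_cast; linarith [(Nat.cast_nonneg k : (0:ℝ) ≤ k)]
      have h3 := (hbound (T + (K + k)) j).1
      nlinarith
  have htendL : ∀ i, Tendsto (fun t => w t i) atTop (nhds (L i)) := by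
    intro i
    by_cases hi : a i = astar
    · simp only [hL, if_pos hi]; exact htendsup i hi
    · simp only [hL, if_neg hi]
      obtain ⟨T0, hT0⟩ := hzero i hi
      exact Tendsto.congr' (eventually_atTop.2 ⟨T0, fun t ht => (hT0 t ht).symm⟩)
        tendsto_const_nhds
  refine ⟨L, hLmem, ?_, htendL⟩
  intro i
  rw [maxErase_eq_sup' i (herase i)]
  by_cases hi : a i = astar
  · rcases eq_or_lt_of_le (hsup_mem i).2 with h1 | h1
    · have hLi : L i = 1 := by simp only [hL, if_pos hi]; exact h1
      rw [hLi]
      apply clamp_one_le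
      have hSle' := hSle L hLmem i
      nlinarith [hγ i, hi ▸ hSle']
    · have hS1 := hkey i hi h1
      have hS2 : Tendsto (fun t => (Finset.univ.erase i).sup' (herase i) (fun j => a j * w t j))
          atTop (nhds ((Finset.univ.erase i).sup' (herase i) (fun j => a j * L j))) :=
        tendsto_finset_sup' (herase i) _ _ (fun j _ => tendsto_const_nhds.mul (htendL j))
      have hSeq : (Finset.univ.erase i).sup' (herase i) (fun j => a j * L j) = astar :=
        tendsto_nhds_unique hS2 hS1
      rw [hSeq, hi]
      simp only [sub_self, mul_zero, add_zero]
      exact clamp_of_mem (hLmem i)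
  · have hLi : L i = 0 := by simp only [hL, if_neg hi]
    have hne_star : istar ≠ i := by rintro rfl; exact hi histar
    have hSge : astar ≤ (Finset.univ.erase i).sup' (herase i) (fun j => a j * L j) := by
      have h1 : a istar * L istar ≤
          (Finset.univ.erase i).sup' (herase i) (fun j => a j * L j) :=
        Finset.le_sup' (fun j => a j * L j)
          (Finset.mem_erase.2 ⟨hne_star, Finset.mem_univ istar⟩)
      rwa [histar, hListar, mul_one] at h1
    rw [hLi]
    apply clamp_nonpos
    have h2 : a i < astar := lt_of_le_of_ne (hle i) hi
    nlinarith [hγ i]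

theorem pbrag_converges_to_equilibrium {n m : ℕ} (f : Fin n → Fin m → ℝ)
    (hf : ∀ i q, 0 ≤ f i q)
    (hnt : ∀ q : Fin m, ∃ j : Fin n, ¬ Dominating f j q)
    (γ : Fin n → Fin m → ℝ) (hγ : ∀ i q, 0 < γ i q)
    (W : ℕ → Fin n → Fin m → ℝ)
    (hW0 : InUnit (W 0)) (hWs : ∀ t, W (t + 1) = pbrag f γ (W t)) :
    ∃ Wbar : Fin n → Fin m → ℝ, InUnit Wbar ∧ pbrag f γ Wbar = Wbar ∧
      ∀ i q, Tendsto (fun t => W t i q) atTop (nhds (Wbar i q)) := by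
  have hcol : ∀ q : Fin m, ∃ L : Fin n → ℝ, (∀ i, L i ∈ Set.Icc (0:ℝ) 1) ∧
      (∀ i, clamp (L i + γ i q * (f i q - maxErase i (fun j => f j q * L j))) = L i) ∧
      ∀ i, Tendsto (fun t => W t i q) atTop (nhds (L i)) := by
    intro q
    obtain ⟨j, hj⟩ := hnt q
    have hd : ∃ k, f j q < f k q := by
      by_contra hcon
      push_neg at hcon
      exact hj fun k => hcon k
    obtain ⟨k, hk⟩ := hd
    exact column (fun i => f i q) (fun i => hf i q) ⟨j, k, hk⟩ (fun i => γ i q)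
      (fun i => hγ i q) (fun t i => W t i q) (fun i => hW0 i q)
      (fun t i => by show W (t+1) i q = _; rw [hWs t]; rfl)
  choose L hL1 hL2 hL3 using hcol
  refine ⟨fun i q => L q i, fun i q => hL1 q i, ?_, fun i q => hL3 q i⟩
  funext i q
  exact hL2 q i
end
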